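/- There exists an order ω on the Pascal-Bratteli diagram such that the set of ω-minimal infinite paths in {0,1}^ℕ has the cardinality of the continuum (2^ℵ₀) while the set of ω-maximal infinite paths is countably infinite. -/

import Mathlib

/-- `S x n` is the number of `1`s (i.e. `true`s) among the first `n` coordinates of `x`. -/
def S (x : ℕ → Bool) (n : ℕ) : ℕ := ∑ k ∈ Finset.range n, if x k then 1 else 0

/-- The vertex of level `n` visited by the path `x`. -/
def vtx (x : ℕ → Bool) (n : ℕ) : ℕ × ℕ := (S x n, n - S x n)

/-- The path `x` is minimal for the order `ω`. -/
def IsMinPath (ω : ℕ × ℕ → Bool) (x : ℕ → Bool) : Prop :=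
  ∀ n : ℕ, S x (n + 1) = 0 ∨ (n + 1) - S x (n + 1) = 0 ∨ x n = ω (vtx x (n + 1))

/-- The path `x` is maximal for the order `ω`. -/
def IsMaxPath (ω : ℕ × ℕ → Bool) (x : ℕ → Bool) : Prop :=
  ∀ n : ℕ, S x (n + 1) = 0 ∨ (n + 1) - S x (n + 1) = 0 ∨ x n = !ω (vtx x (n + 1))

namespace PB

/-- block index of level `n` -/
def mI (n : ℕ) : ℕ := Nat.log 4 (n - 1)
/-- offset of level `n` inside its block -/
def sI (n : ℕ) : ℕ := n - 4 ^ mI n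
/-- whether level `n` is in the sweep phase of its block -/
def isSw (n : ℕ) : Bool := decide (1 ≤ sI n ∧ sI n ≤ 2 ^ mI n)
/-- the order -/
def om : ℕ × ℕ → Bool := fun v => isSw (v.1 + v.2) && decide (2 * sI (v.1 + v.2) ≤ v.1 + 1)

lemma mI_sI {m j : ℕ} (h1 : 1 ≤ j) (h2 : j ≤ 3 * 4 ^ m) :
    mI (4 ^ m + j) = m ∧ sI (4 ^ m + j) = j := by
  have hm : mI (4 ^ m + j) = m := by
    unfold mI
    refine Nat.log_eq_of_pow_le_of_lt_pow ?_ ?_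
    · omega
    · have : (4:ℕ) ^ (m+1) = 4 ^ m + 3 * 4 ^ m := by ring
      omega
  refine ⟨hm, ?_⟩
  unfold sI
  rw [hm]
  omega

lemma decomp {ℓ : ℕ} (h : 2 ≤ ℓ) :
    ℓ = 4 ^ mI ℓ + sI ℓ ∧ 1 ≤ sI ℓ ∧ sI ℓ ≤ 3 * 4 ^ mI ℓ := by
  have h1 : 4 ^ mI ℓ ≤ ℓ - 1 := Nat.pow_log_le_self 4 (by omega)
  have h2 : ℓ - 1 < 4 ^ (mI ℓ + 1) := Nat.lt_pow_succ_log_self (by norm_num) (ℓ - 1)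
  have h3 : (4:ℕ) ^ (mI ℓ + 1) = 4 ^ mI ℓ + 3 * 4 ^ mI ℓ := by ring
  unfold sI
  omega

lemma sI_one : sI 1 = 0 := by simp [sI, mI]

lemma isSw_one : isSw 1 = false := by simp [isSw, sI_one]

lemma isSw_zero : isSw 0 = false := by simp [isSw, sI, mI]

/-- position of the lane of `y` after `m` sweeps -/
def q (y : ℕ → Bool) : ℕ → ℕ
  | 0 => 0
  | m+1 => 2 * q y m + (if y m then 1 else 0)

lemma q_lt (y : ℕ → Bool) (m : ℕ) : q y m < 2 ^ m := by
  induction m with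
  | zero => simp [q]
  | succ m ih =>
    have : (2:ℕ) ^ (m+1) = 2 * 2 ^ m := by ring
    simp only [q]
    split <;> omega

/-- the minimal path encoding `y` -/
def xp (y : ℕ → Bool) (n : ℕ) : Bool :=
  if isSw (n+1) then
    (if sI (n+1) ≤ q y (mI (n+1)) then true
     else if sI (n+1) = q y (mI (n+1)) + 1 then y (mI (n+1)) else false)
  else false

/-- intended value of `S (xp y) ℓ` -/
def P (y : ℕ → Bool) (ℓ : ℕ) : ℕ :=
  if ℓ ≤ 1 then 0
  else if isSw ℓ = true ∧ sI ℓ ≤ q y (mI ℓ) then q y (mI ℓ) + sI ℓ else q y (mI ℓ + 1)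

lemma P_pow (y : ℕ → Bool) (m : ℕ) : P y (4 ^ m) = q y m := by
  cases m with
  | zero => simp [P, q]
  | succ m =>
    have h4 : (4:ℕ) ^ (m+1) = 4 ^ m + 3 * 4 ^ m := by ring
    have hp : (1:ℕ) ≤ 4 ^ m := Nat.one_le_two_pow.trans (Nat.pow_le_pow_left (by norm_num) m)
    have hms := mI_sI (m := m) (j := 3 * 4 ^ m) (by omega) le_rfl
    have hsw : isSw (4 ^ (m+1)) = false := by
      have h2 : (2:ℕ) ^ m ≤ 4 ^ m := Nat.pow_le_pow_left (by norm_num) m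
      rw [h4]
      simp only [isSw, hms.1, hms.2, decide_eq_false_iff_not]
      push_neg
      intro _
      omega
    have : ¬ (4:ℕ) ^ (m+1) ≤ 1 := by
      have : (4:ℕ)^(m+1) ≥ 4 := Nat.le_self_pow (by omega) 4
      omega
    rw [P, if_neg this, if_neg (by rw [hsw]; simp)]
    rw [h4] at *
    rw [hms.1]

lemma isSw_iff (n : ℕ) : isSw n = true ↔ (1 ≤ sI n ∧ sI n ≤ 2 ^ mI n) := by simp [isSw]

lemma P_eval (y : ℕ → Bool) {ℓ : ℕ} (h : 2 ≤ ℓ) :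
    P y ℓ = if isSw ℓ = true ∧ sI ℓ ≤ q y (mI ℓ) then q y (mI ℓ) + sI ℓ
            else q y (mI ℓ + 1) := by
  unfold P; rw [if_neg (by omega)]

lemma xp_eval (y : ℕ → Bool) (ℓ : ℕ) :
    xp y ℓ = if isSw (ℓ+1) = true then
      (if sI (ℓ+1) ≤ q y (mI (ℓ+1)) then true
       else if sI (ℓ+1) = q y (mI (ℓ+1)) + 1 then y (mI (ℓ+1)) else false)
     else false := by
  unfold xp
  rcases Bool.eq_false_or_eq_true (isSw (ℓ+1)) with h | h <;> simp [h]

lemma P_step (y : ℕ → Bool) {ℓ : ℕ} (h : 1 ≤ ℓ) :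
    P y (ℓ+1) = P y ℓ + (if xp y ℓ then 1 else 0) := by
  obtain ⟨hd, hs1, hs3⟩ := decomp (ℓ := ℓ+1) (by omega)
  have hq := q_lt y (mI (ℓ+1))
  have h2pow : (2:ℕ) ^ (mI (ℓ+1)) ≤ 4 ^ (mI (ℓ+1)) := Nat.pow_le_pow_left (by norm_num) _
  have h2p1 : (1:ℕ) ≤ 2 ^ (mI (ℓ+1)) := Nat.one_le_two_pow
  have hP1 := P_eval y (ℓ := ℓ+1) (by omega)
  have hxp := xp_eval y ℓ
  rcases Nat.lt_or_ge (sI (ℓ+1)) 2 with hj1 | hj2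
  · -- sI (ℓ+1) = 1, so ℓ = 4 ^ mI (ℓ+1)
    have hj : sI (ℓ+1) = 1 := by omega
    have hPl : P y ℓ = q y (mI (ℓ+1)) := by
      have hl : ℓ = 4 ^ (mI (ℓ+1)) := by omega
      conv_lhs => rw [hl, P_pow]
    have hsw : isSw (ℓ+1) = true := by rw [isSw_iff]; omega
    rcases Nat.eq_zero_or_pos (q y (mI (ℓ+1))) with hq0 | hqpos
    · have h1 : ¬ (sI (ℓ+1) ≤ q y (mI (ℓ+1))) := by omega
      have h2 : sI (ℓ+1) = q y (mI (ℓ+1)) + 1 := by omega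
      have hbit : xp y ℓ = y (mI (ℓ+1)) := by
        rw [hxp, if_pos hsw, if_neg h1, if_pos h2]
      have hPl1 : P y (ℓ+1) = q y (mI (ℓ+1) + 1) := by
        rw [hP1, if_neg (by rintro ⟨-, hh⟩; exact h1 hh)]
      rw [hPl1, hPl, hbit]
      simp [q, hq0]
    · have h1 : sI (ℓ+1) ≤ q y (mI (ℓ+1)) := by omega
      have hbit : xp y ℓ = true := by rw [hxp, if_pos hsw, if_pos h1]
      have hPl1 : P y (ℓ+1) = q y (mI (ℓ+1)) + sI (ℓ+1) := by
        rw [hP1, if_pos ⟨hsw, h1⟩]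
      rw [hPl1, hPl, hbit, hj]
      have h5 : (if true = true then (1:ℕ) else 0) = 1 := rfl
      rw [h5]
  · -- sI (ℓ+1) ≥ 2 : ℓ = 4^M + (sI (ℓ+1) - 1)
    have hms := mI_sI (m := mI (ℓ+1)) (j := sI (ℓ+1) - 1) (by omega) (by omega)
    have hleq : ℓ = 4 ^ (mI (ℓ+1)) + (sI (ℓ+1) - 1) := by omega
    have hml : mI ℓ = mI (ℓ+1) := by conv_lhs => rw [hleq, hms.1]
    have hsl : sI ℓ = sI (ℓ+1) - 1 := by conv_lhs => rw [hleq, hms.2]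
    have hPl := P_eval y (ℓ := ℓ) (by omega)
    rw [hml, hsl] at hPl
    rcases Nat.lt_or_ge (q y (mI (ℓ+1))) (sI (ℓ+1)) with hc | hc
    · rcases Nat.eq_or_lt_of_le hc with hc2 | hc2
      · -- sI (ℓ+1) = q + 1 : branching step
        have hsw : isSw (ℓ+1) = true := by rw [isSw_iff]; omega
        have hswl : isSw ℓ = true := by rw [isSw_iff, hsl, hml]; omega
        have h1 : ¬ (sI (ℓ+1) ≤ q y (mI (ℓ+1))) := by omega
        have h2 : sI (ℓ+1) = q y (mI (ℓ+1)) + 1 := by omega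
        have h3 : sI (ℓ+1) - 1 ≤ q y (mI (ℓ+1)) := by omega
        have hbit : xp y ℓ = y (mI (ℓ+1)) := by
          rw [hxp, if_pos hsw, if_neg h1, if_pos h2]
        have hPl1 : P y (ℓ+1) = q y (mI (ℓ+1) + 1) := by
          rw [hP1, if_neg (by rintro ⟨-, hh⟩; exact h1 hh)]
        have hPl2 : P y ℓ = q y (mI (ℓ+1)) + (sI (ℓ+1) - 1) := by
          rw [hPl, if_pos ⟨hswl, h3⟩]
        rw [hPl1, hPl2, hbit]
        simp only [q]
        omega
      · -- sI (ℓ+1) ≥ q + 2 : frozen / rest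
        have h1 : ¬ (sI (ℓ+1) ≤ q y (mI (ℓ+1))) := by omega
        have h2 : ¬ (sI (ℓ+1) = q y (mI (ℓ+1)) + 1) := by omega
        have h3 : ¬ (sI (ℓ+1) - 1 ≤ q y (mI (ℓ+1))) := by omega
        have hbit : xp y ℓ = false := by
          rcases Bool.eq_false_or_eq_true (isSw (ℓ+1)) with hsw | hsw
          · rw [hxp, if_pos hsw, if_neg h1, if_neg h2]
          · rw [hxp, hsw]; simp
        have hPl1 : P y (ℓ+1) = q y (mI (ℓ+1) + 1) := by
          rw [hP1, if_neg (by rintro ⟨-, hh⟩; exact h1 hh)]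
        have hPl2 : P y ℓ = q y (mI (ℓ+1) + 1) := by
          rw [hPl, if_neg (by rintro ⟨-, hh⟩; exact h3 hh)]
        rw [hPl1, hPl2, hbit]
        simp
    · -- sI (ℓ+1) ≤ q : moving right
      have hsw : isSw (ℓ+1) = true := by rw [isSw_iff]; omega
      have hswl : isSw ℓ = true := by rw [isSw_iff, hsl, hml]; omega
      have h1 : sI (ℓ+1) ≤ q y (mI (ℓ+1)) := by omega
      have h3 : sI (ℓ+1) - 1 ≤ q y (mI (ℓ+1)) := by omega
      have hbit : xp y ℓ = true := by rw [hxp, if_pos hsw, if_pos h1]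
      have hPl1 : P y (ℓ+1) = q y (mI (ℓ+1)) + sI (ℓ+1) := by
        rw [hP1, if_pos ⟨hsw, h1⟩]
      have hPl2 : P y ℓ = q y (mI (ℓ+1)) + (sI (ℓ+1) - 1) := by
        rw [hPl, if_pos ⟨hswl, h3⟩]
      rw [hPl1, hPl2, hbit]
      have h5 : (if true = true then (1:ℕ) else 0) = 1 := rfl
      rw [h5]
      omega

lemma S_succ (x : ℕ → Bool) (n : ℕ) : S x (n+1) = S x n + (if x n then 1 else 0) :=
  Finset.sum_range_succ _ n

lemma S_xp (y : ℕ → Bool) (ℓ : ℕ) : S (xp y) ℓ = P y ℓ := by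
  induction ℓ with
  | zero => simp [S, P]
  | succ ℓ ih =>
    rw [S_succ, ih]
    rcases Nat.eq_zero_or_pos ℓ with h0 | hpos
    · subst h0
      have : xp y 0 = false := by rw [xp_eval, if_neg (by rw [isSw_one]; simp)]
      simp [this, P, q]
    · rw [P_step y hpos]

lemma S_le (x : ℕ → Bool) (n : ℕ) : S x n ≤ n := by
  induction n with
  | zero => simp [S]
  | succ n ih => rw [S_succ]; split <;> omega

lemma om_apply (a b : ℕ) : om (a, b) = (isSw (a+b) && decide (2 * sI (a+b) ≤ a + 1)) := rfl

lemma xp_isMin (y : ℕ → Bool) : IsMinPath om (xp y) := by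
  intro n
  right; right
  have hS := S_xp y (n+1)
  have hSle : S (xp y) (n+1) ≤ n+1 := S_le _ _
  show xp y n = om (S (xp y) (n+1), (n+1) - S (xp y) (n+1))
  rw [om_apply, show S (xp y) (n+1) + ((n+1) - S (xp y) (n+1)) = n+1 by omega, hS]
  have hxp := xp_eval y n
  rcases Nat.eq_zero_or_pos n with h0 | hpos
  · subst h0
    rw [hxp, isSw_one]
    simp
  · obtain ⟨hd, hs1, hs3⟩ := decomp (ℓ := n+1) (by omega)
    have hq := q_lt y (mI (n+1))
    have hP := P_eval y (ℓ := n+1) (by omega)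
    rcases Bool.eq_false_or_eq_true (isSw (n+1)) with hsw | hsw
    · -- sweep level
      have hsw' := (isSw_iff (n+1)).1 hsw
      rcases Nat.lt_or_ge (q y (mI (n+1))) (sI (n+1)) with hc | hc
      · rcases Nat.eq_or_lt_of_le hc with hc2 | hc2
        · -- sI = q+1 : the branching bit
          have h1 : ¬ (sI (n+1) ≤ q y (mI (n+1))) := by omega
          have h2 : sI (n+1) = q y (mI (n+1)) + 1 := by omega
          have hbit : xp y n = y (mI (n+1)) := by
            rw [hxp, if_pos hsw, if_neg h1, if_pos h2]
          have hPv : P y (n+1) = q y (mI (n+1) + 1) := by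
            rw [hP, if_neg (by rintro ⟨-, hh⟩; exact h1 hh)]
          rw [hbit, hPv, hsw, Bool.true_and]
          rcases Bool.eq_false_or_eq_true (y (mI (n+1))) with hy | hy
          · have hqv : q y (mI (n+1) + 1) = 2 * q y (mI (n+1)) + 1 := by
              simp [q, hy]
            rw [hy, hqv]
            symm
            rw [decide_eq_true_eq]
            omega
          · have hqv : q y (mI (n+1) + 1) = 2 * q y (mI (n+1)) := by
              simp [q, hy]
            rw [hy, hqv]
            symm
            rw [show (false : Bool) = (decide False) from rfl]
            rw [decide_eq_decide]
            constructor
            · intro hh; exact absurd hh (by omega)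
            · intro hh; exact hh.elim
        · -- sI ≥ q+2 : frozen
          have h1 : ¬ (sI (n+1) ≤ q y (mI (n+1))) := by omega
          have h2 : ¬ (sI (n+1) = q y (mI (n+1)) + 1) := by omega
          have hbit : xp y n = false := by
            rw [hxp, if_pos hsw, if_neg h1, if_neg h2]
          have hPv : P y (n+1) = q y (mI (n+1) + 1) := by
            rw [hP, if_neg (by rintro ⟨-, hh⟩; exact h1 hh)]
          have hqs : q y (mI (n+1) + 1) = 2 * q y (mI (n+1)) + (if y (mI (n+1)) then 1 else 0) := rfl
          have hqle : q y (mI (n+1) + 1) ≤ 2 * q y (mI (n+1)) + 1 := by rw [hqs]; split <;> omega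
          rw [hbit, hPv, hsw, Bool.true_and]
          symm
          simp only [Bool.false_eq, decide_eq_false_iff_not]
          omega
      · -- sI ≤ q : moving right
        have hbit : xp y n = true := by rw [hxp, if_pos hsw, if_pos (by omega)]
        have hPv : P y (n+1) = q y (mI (n+1)) + sI (n+1) := by
          rw [hP, if_pos ⟨hsw, by omega⟩]
        rw [hbit, hPv, hsw, Bool.true_and]
        symm
        simp only [Bool.true_eq, decide_eq_true_eq]
        omega
    · -- rest level : bit false, om false
      rw [hxp, hsw]
      simp

lemma q_congr {y y' : ℕ → Bool} {m : ℕ} (h : ∀ k, k < m → y k = y' k) :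
    q y m = q y' m := by
  induction m with
  | zero => rfl
  | succ m ih =>
    have h1 : q y m = q y' m := ih (fun k hk => h k (by omega))
    simp only [q, h1, h m (by omega)]

lemma xp_inj : Function.Injective xp := by
  intro y y' hxy
  funext m
  induction m using Nat.strong_induction_on with
  | _ m ih =>
    have hq : q y m = q y' m := q_congr ih
    have hlt := q_lt y m
    have h2pow : (2:ℕ) ^ m ≤ 4 ^ m := Nat.pow_le_pow_left (by norm_num) m
    have hms := mI_sI (m := m) (j := q y m + 1) (by omega) (by omega)
    have hadd : 4 ^ m + q y m + 1 = 4 ^ m + (q y m + 1) := by omega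
    have hsw : isSw (4 ^ m + q y m + 1) = true := by
      rw [isSw_iff, hadd, hms.1, hms.2]; omega
    have h1 : xp y (4 ^ m + q y m) = y m := by
      rw [xp_eval, if_pos hsw]
      rw [hadd, hms.1, hms.2]
      rw [if_neg (by omega), if_pos rfl]
    have h1' : xp y' (4 ^ m + q y m) = y' m := by
      rw [xp_eval, if_pos hsw]
      rw [hadd, hms.1, hms.2, hq]
      rw [if_neg (by omega), if_pos rfl]
    rw [← h1, ← h1', hxy]

/-- the maximal path leaving the top axis at level `4^k` -/
def mx (k : ℕ) (n : ℕ) : Bool := if n + 1 ≤ 4 ^ k then true else !(isSw (n+1))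

lemma S_true_prefix (x : ℕ → Bool) (ℓ : ℕ) (h : ∀ i, i < ℓ → x i = true) : S x ℓ = ℓ := by
  induction ℓ with
  | zero => simp [S]
  | succ ℓ ih =>
    rw [S_succ, ih (fun i hi => h i (by omega)), h ℓ (by omega)]
    simp

lemma S_lb (x : ℕ → Bool) (ℓ : ℕ) (T : Finset ℕ) (hT : T ⊆ Finset.range ℓ)
    (h : ∀ i ∈ T, x i = true) : T.card ≤ S x ℓ := by
  classical
  have h1 : (T.card : ℕ) = ∑ i ∈ T, (if x i then 1 else 0) := by
    rw [Finset.card_eq_sum_ones]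
    exact Finset.sum_congr rfl (fun i hi => by rw [h i hi]; rfl)
  rw [h1]
  exact Finset.sum_le_sum_of_subset hT

lemma mx_isMax {k : ℕ} (hk : 1 ≤ k) : IsMaxPath om (mx k) := by
  intro n
  have h4pos : 0 < (4:ℕ) ^ k := pow_pos (by norm_num) k
  by_cases hax : n + 1 ≤ 4 ^ k
  · -- still on the top axis
    right; left
    have hS : S (mx k) (n+1) = n+1 :=
      S_true_prefix _ _ (fun i hi => by unfold mx; rw [if_pos (by omega)])
    omega
  · right; right
    have hbit : mx k n = !(isSw (n+1)) := if_neg (by omega)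
    have hSle := S_le (mx k) (n+1)
    show mx k n = !om (S (mx k) (n+1), (n+1) - S (mx k) (n+1))
    rw [om_apply, show S (mx k) (n+1) + ((n+1) - S (mx k) (n+1)) = n+1 by omega]
    rcases Bool.eq_false_or_eq_true (isSw (n+1)) with hsw | hsw
    · -- sweep level : show om is true
      rw [hbit, hsw]
      have hsw' := (isSw_iff (n+1)).1 hsw
      obtain ⟨hd, hs1, hs3⟩ := decomp (ℓ := n+1) (by omega)
      have hMk : k ≤ mI (n+1) := by
        have h1 : (4:ℕ) ^ k ≤ n := by omega
        have h2 : Nat.log 4 (4 ^ k) ≤ Nat.log 4 n := Nat.log_mono_right h1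
        rwa [Nat.log_pow (by norm_num)] at h2
      have hdec : decide (2 * sI (n+1) ≤ S (mx k) (n+1) + 1) = true := by
        rw [decide_eq_true_eq]
        rcases Nat.eq_or_lt_of_le hMk with hM | hM
        · -- first sweep after leaving the axis : a = 4^k (at least)
          have hT : (Finset.range (4^k)).card ≤ S (mx k) (n+1) := by
            apply S_lb
            · intro i hi
              simp only [Finset.mem_range] at hi ⊢
              omega
            · intro i hi
              simp only [Finset.mem_range] at hi
              unfold mx
              rw [if_pos (by omega)]
          rw [Finset.card_range] at hT
          have h4k : (4:ℕ) ^ k = 2 ^ k * 2 ^ k := by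
            rw [← Nat.mul_pow]
          have h2k : (2:ℕ) ≤ 2 ^ k := by
            calc (2:ℕ) = 2^1 := rfl
            _ ≤ 2 ^ k := Nat.pow_le_pow_right (by norm_num) hk
          have : 2 * 2 ^ k ≤ 2 ^ k * 2 ^ k := Nat.mul_le_mul_right _ h2k
          have hs2 : sI (n+1) ≤ 2 ^ mI (n+1) := hsw'.2
          rw [← hM] at hs2
          omega
        · -- a later sweep : use the previous rest phase
          set M := mI (n+1) with hMdef
          have hM1 : 1 ≤ M := by omega
          have hm' : M - 1 + 1 = M := by omega
          obtain ⟨A, hA⟩ : ∃ A, (2:ℕ)^(M-1) = A := ⟨_, rfl⟩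
          have hA2 : 2 ≤ A := by
            rw [← hA]
            calc (2:ℕ) = 2^1 := rfl
            _ ≤ 2 ^ (M-1) := Nat.pow_le_pow_right (by norm_num) (by omega)
          have h2M : (2:ℕ) ^ M = 2 * A := by
            conv_lhs => rw [← hm', pow_succ]
            rw [hA]; ring
          have h4M1 : (4:ℕ) ^ (M-1) = A * A := by
            rw [← hA, ← Nat.mul_pow]
          have h4M : (4:ℕ) ^ M = 4 * (A * A) := by
            conv_lhs => rw [← hm', pow_succ]
            rw [h4M1]; ring
          have e5 : (4:ℕ) ^ k ≤ A * A := by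
            rw [← h4M1]
            exact Nat.pow_le_pow_right (by norm_num) (by omega)
          have hAA : 2 * A ≤ A * A := Nat.mul_le_mul_right A hA2
          -- the set of known-true bits
          classical
          set T : Finset ℕ :=
            Finset.range (4^k) ∪ Finset.Ico (4^(M-1) + 2^(M-1)) (4^M) with hTdef
          have hdisj : Disjoint (Finset.range (4^k)) (Finset.Ico (4^(M-1) + 2^(M-1)) (4^M)) := by
            rw [Finset.disjoint_left]
            intro i hi hi2
            simp only [Finset.mem_range] at hi
            simp only [Finset.mem_Ico] at hi2
            have : (4:ℕ)^k ≤ 4^(M-1) := Nat.pow_le_pow_right (by norm_num) (by omega)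
            omega
          have hcard : T.card = 4^k + (4^M - (4^(M-1) + 2^(M-1))) := by
            rw [hTdef, Finset.card_union_of_disjoint hdisj, Finset.card_range, Nat.card_Ico]
          have hTS : T.card ≤ S (mx k) (n+1) := by
            apply S_lb
            · intro i hi
              simp only [hTdef, Finset.mem_union, Finset.mem_range, Finset.mem_Ico] at hi
              simp only [Finset.mem_range]
              have e5' : (4:ℕ)^k ≤ 4^(M-1) := Nat.pow_le_pow_right (by norm_num) (by omega)
              have hpos1 : 0 < (4:ℕ)^(M-1) := pow_pos (by norm_num) _
              omega
            · intro i hi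
              simp only [hTdef, Finset.mem_union, Finset.mem_range, Finset.mem_Ico] at hi
              have e5' : (4:ℕ)^k ≤ 4^(M-1) := Nat.pow_le_pow_right (by norm_num) (by omega)
              have hpos2 : 0 < (2:ℕ)^(M-1) := pow_pos (by norm_num) _
              rcases hi with hi | hi
              · unfold mx; rw [if_pos (by omega)]
              · unfold mx
                rw [if_neg (by omega)]
                have hms := mI_sI (m := M - 1) (j := i + 1 - 4^(M-1))
                  (by omega) (by rw [h4M1]; rw [h4M] at hi; rw [← hA] at hi ⊢; omega)
                have hin : 4 ^ (M-1) + (i + 1 - 4^(M-1)) = i + 1 := by omega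
                rw [hin] at hms
                have hswf : isSw (i+1) = false := by
                  simp only [isSw, hms.1, hms.2, decide_eq_false_iff_not]
                  push_neg
                  intro _
                  omega
                rw [hswf]
                rfl
          have hs2 : sI (n+1) ≤ 2 * A := by rw [← h2M]; exact hsw'.2
          rw [hcard, h4M, h4M1, hA] at hTS
          have h4k1 : 1 ≤ (4:ℕ)^k := h4pos
          omega
      rw [hdec]
      rfl
    · -- rest level : om is false
      rw [hbit, hsw]
      simp

lemma S_congr {x x' : ℕ → Bool} {n : ℕ} (h : ∀ i, i < n → x i = x' i) : S x n = S x' n :=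
  Finset.sum_congr rfl (fun i hi => by rw [h i (Finset.mem_range.mp hi)])

lemma S_eq_n {x : ℕ → Bool} {n : ℕ} (h : S x n = n) : ∀ i, i < n → x i = true := by
  induction n with
  | zero => omega
  | succ n ih =>
    have hs := S_succ x n
    have hle := S_le x n
    rcases Bool.eq_false_or_eq_true (x n) with hb | hb
    · rw [hb] at hs; simp at hs
      have h1 : S x n = n := by omega
      intro i hi
      rcases Nat.lt_or_ge i n with hh | hh
      · exact ih h1 i hh
      · rw [show i = n by omega, hb]
    · rw [hb] at hs; simp at hs
      exfalso; omega

lemma S_eq_zero {x : ℕ → Bool} {n : ℕ} (h : S x n = 0) : ∀ i, i < n → x i = false := by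
  induction n with
  | zero => omega
  | succ n ih =>
    have hs := S_succ x n
    rcases Bool.eq_false_or_eq_true (x n) with hb | hb
    · rw [hb] at hs; simp at hs
      exfalso; omega
    · rw [hb] at hs; simp at hs
      have h1 : S x n = 0 := by omega
      intro i hi
      rcases Nat.lt_or_ge i n with hh | hh
      · exact ih h1 i hh
      · rw [show i = n by omega, hb]

lemma om_mono {a b : ℕ} (h : om (a, b+1) = true) : om (a+1, b) = true := by
  rw [om_apply] at h ⊢
  rw [show a + (b+1) = a + b + 1 by omega] at h
  rw [show a + 1 + b = a + b + 1 by omega]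
  rw [Bool.and_eq_true] at h ⊢
  rcases h with ⟨h1, h2⟩
  rw [decide_eq_true_eq] at h2
  exact ⟨h1, decide_eq_true (by omega)⟩

lemma max_dicho {x x' : ℕ → Bool} (hx : IsMaxPath om x) (hx' : IsMaxPath om x')
    {n : ℕ} (hagree : ∀ i, i < n → x i = x' i) (hxn : x n = true) (hx'n : x' n = false) :
    (∀ i, i ≤ n → x i = true) ∨ (∀ i, i ≤ n → x' i = false) := by
  have hσ : S x n = S x' n := S_congr hagree
  have hxS : S x (n+1) = S x n + 1 := by rw [S_succ, hxn]; rfl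
  have hx'S : S x' (n+1) = S x' n := by rw [S_succ, hx'n]; rfl
  have hle : S x n ≤ n := S_le x n
  rcases hx n with h | h | h
  · omega
  · left
    have hall : ∀ i, i < n → x i = true := S_eq_n (by omega)
    intro i hi
    rcases Nat.lt_or_ge i n with hh | hh
    · exact hall i hh
    · rw [show i = n by omega, hxn]
  · rcases hx' n with h' | h' | h'
    · right
      have hall : ∀ i, i < n → x' i = false := S_eq_zero (by omega)
      intro i hi
      rcases Nat.lt_or_ge i n with hh | hh
      · exact hall i hh
      · rw [show i = n by omega, hx'n]
    · exfalso; omega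
    · exfalso
      have e1 : vtx x (n+1) = (S x n + 1, n - S x n) := by
        unfold vtx
        rw [hxS, show (n+1) - (S x n + 1) = n - S x n by omega]
      have e2 : vtx x' (n+1) = (S x n, (n - S x n) + 1) := by
        unfold vtx
        rw [hx'S, ← hσ, show (n+1) - S x n = (n - S x n) + 1 by omega]
      rw [e1, hxn] at h
      rw [e2, hx'n] at h'
      have hT : om (S x n, (n - S x n) + 1) = true := by
        rcases Bool.eq_false_or_eq_true (om (S x n, (n - S x n) + 1)) with hb | hb
        · exact hb
        · rw [hb] at h'; simp at h'
      have hF : om (S x n + 1, n - S x n) = false := by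
        rcases Bool.eq_false_or_eq_true (om (S x n + 1, n - S x n)) with hb | hb
        · rw [hb] at h; simp at h
        · exact hb
      rw [om_mono hT] at hF
      simp at hF

open Classical in
noncomputable def Phi (x : ℕ → Bool) : (ℕ × Bool) ⊕ Bool :=
  if h : ∃ n, x n ≠ x 0 then Sum.inl (Nat.find h, x 0) else Sum.inr (x 0)

lemma find_eq {x : ℕ → Bool} (hcx : ∃ m, x m ≠ x 0) {n : ℕ} (hne : x n ≠ x 0)
    (hlt : ∀ i, i < n → x i = x 0) : Nat.find hcx = n := by
  rw [Nat.find_eq_iff]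
  exact ⟨hne, fun i hi => not_not.mpr (hlt i hi)⟩

lemma find_gt {x : ℕ → Bool} (hcx : ∃ m, x m ≠ x 0) {n : ℕ}
    (hall : ∀ i, i ≤ n → x i = x 0) : n < Nat.find hcx := by
  by_contra hcon
  exact (Nat.find_spec hcx) (hall _ (by omega))

lemma Phi_inj {x x' : ℕ → Bool} (hx : IsMaxPath om x) (hx' : IsMaxPath om x')
    (hP : Phi x = Phi x') : x = x' := by
  by_contra hne
  have hex : ∃ n, x n ≠ x' n := Function.ne_iff.mp hne
  have hn : x (Nat.find hex) ≠ x' (Nat.find hex) := Nat.find_spec hex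
  have hagree : ∀ i, i < Nat.find hex → x i = x' i :=
    fun i hi => not_not.mp (Nat.find_min hex hi)
  set n := Nat.find hex with hndef
  by_cases hcx : ∃ m, x m ≠ x 0 <;> by_cases hcx' : ∃ m, x' m ≠ x' 0
  · -- both non-constant
    rw [Phi, dif_pos hcx, Phi, dif_pos hcx'] at hP
    have hN : Nat.find hcx = Nat.find hcx' := by
      have := Sum.inl.inj hP; exact congrArg Prod.fst this
    have h0 : x 0 = x' 0 := by
      have := Sum.inl.inj hP; exact congrArg Prod.snd this
    have hn0 : 0 < n := by
      rcases Nat.eq_zero_or_pos n with hz | hz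
      · exfalso; rw [hz] at hn; exact hn h0
      · exact hz
    rcases Bool.eq_false_or_eq_true (x n) with hb | hb
    · -- x n = true hence x' n = false
      have hb' : x' n = false := by
        rcases Bool.eq_false_or_eq_true (x' n) with hv | hv
        · exfalso; rw [hb, hv] at hn; exact hn rfl
        · exact hv
      rcases max_dicho hx hx' hagree hb hb' with hall | hall
      · have hx0 : x 0 = true := hall 0 (by omega)
        have h1 : n < Nat.find hcx := find_gt hcx (fun i hi => by rw [hall i hi, hx0])
        have h2 : Nat.find hcx' = n := by
          apply find_eq hcx'
          · rw [hb', ← h0, hx0]; simp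
          · intro i hi
            rw [← hagree i hi, hall i (by omega), ← h0, hx0]
        omega
      · have hx'0 : x' 0 = false := hall 0 (by omega)
        have h1 : n < Nat.find hcx' := find_gt hcx' (fun i hi => by rw [hall i hi, hx'0])
        have h2 : Nat.find hcx = n := by
          apply find_eq hcx
          · rw [hb, h0, hx'0]; simp
          · intro i hi
            rw [hagree i hi, hall i (by omega), h0, hx'0]
        omega
    · -- x n = false hence x' n = true
      have hb' : x' n = true := by
        rcases Bool.eq_false_or_eq_true (x' n) with hv | hv
        · exact hv
        · exfalso; rw [hb, hv] at hn; exact hn rfl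
      rcases max_dicho hx' hx (fun i hi => (hagree i hi).symm) hb' hb with hall | hall
      · have hx'0 : x' 0 = true := hall 0 (by omega)
        have h1 : n < Nat.find hcx' := find_gt hcx' (fun i hi => by rw [hall i hi, hx'0])
        have h2 : Nat.find hcx = n := by
          apply find_eq hcx
          · rw [hb, h0, hx'0]; simp
          · intro i hi
            rw [hagree i hi, hall i (by omega), h0, hx'0]
        omega
      · have hx0 : x 0 = false := hall 0 (by omega)
        have h1 : n < Nat.find hcx := find_gt hcx (fun i hi => by rw [hall i hi, hx0])
        have h2 : Nat.find hcx' = n := by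
          apply find_eq hcx'
          · rw [hb', ← h0, hx0]; simp
          · intro i hi
            rw [← hagree i hi, hall i (by omega), ← h0, hx0]
        omega
  · rw [Phi, dif_pos hcx, Phi, dif_neg hcx'] at hP; exact Sum.inl_ne_inr hP
  · rw [Phi, dif_neg hcx, Phi, dif_pos hcx'] at hP; exact Sum.inr_ne_inl hP
  · -- both constant
    push_neg at hcx hcx'
    rw [Phi, dif_neg (by push_neg; exact hcx), Phi, dif_neg (by push_neg; exact hcx')] at hP
    have h0 : x 0 = x' 0 := Sum.inr.inj hP
    exact hn (by rw [hcx n, hcx' n, h0])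

lemma mx_mono_inj {k1 k2 : ℕ} (h12 : k1 < k2) : mx (k1) ≠ mx (k2) := by
  intro hcon
  have h4 : (4:ℕ)^k1 + 1 ≤ 4^k2 := by
    have : (4:ℕ)^(k1+1) ≤ 4^k2 := Nat.pow_le_pow_right (by norm_num) (by omega)
    have h2 : (4:ℕ)^(k1+1) = 4 * 4^k1 := by rw [pow_succ]; ring
    have h3 : 0 < (4:ℕ)^k1 := pow_pos (by norm_num) _
    omega
  have e1 : mx k1 (4^k1) = false := by
    unfold mx
    rw [if_neg (by omega)]
    have hms := mI_sI (m := k1) (j := 1) (by norm_num)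
      (by have := pow_pos (show (0:ℕ) < 4 by norm_num) k1; omega)
    have hsw : isSw (4^k1 + 1) = true := by
      rw [isSw_iff, hms.1, hms.2]
      exact ⟨le_rfl, Nat.one_le_two_pow⟩
    rw [hsw]; rfl
  have e2 : mx k2 (4^k1) = true := by
    unfold mx
    rw [if_pos (by omega)]
  rw [hcon] at e1
  rw [e1] at e2
  exact Bool.noConfusion e2

end PB

/-- there is an order on the Pascal-Bratteli diagram with continuum many
minimal infinite paths and countably infinitely many maximal infinite paths. -/
theorem pascal_order_continuum_min_countable_max :
    ∃ ω : ℕ × ℕ → Bool,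
      Cardinal.mk {x : ℕ → Bool | IsMinPath ω x} = Cardinal.continuum ∧
      Cardinal.mk {x : ℕ → Bool | IsMaxPath ω x} = Cardinal.aleph0 := by
  refine ⟨PB.om, ?_, ?_⟩
  · have hfun : Cardinal.mk (ℕ → Bool) = Cardinal.continuum := by
      rw [← Cardinal.two_power_aleph0, ← Cardinal.mk_bool, ← Cardinal.mk_nat,
        Cardinal.power_def]
    apply le_antisymm
    · rw [← hfun]
      exact Cardinal.mk_le_of_injective
        (f := fun z : {x : ℕ → Bool | IsMinPath PB.om x} => (z : ℕ → Bool))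
        Subtype.val_injective
    · rw [← hfun]
      exact Cardinal.mk_le_of_injective
        (f := fun y : ℕ → Bool =>
          (⟨PB.xp y, PB.xp_isMin y⟩ : {x : ℕ → Bool | IsMinPath PB.om x}))
        (fun y y' h => PB.xp_inj (congrArg Subtype.val h))
  · have hcount : Countable {x : ℕ → Bool | IsMaxPath PB.om x} := by
      apply Function.Injective.countable
        (f := fun z : {x : ℕ → Bool | IsMaxPath PB.om x} => PB.Phi z.1)
      intro z z' h
      exact Subtype.ext (PB.Phi_inj z.2 z'.2 h)
    have hinf : Infinite {x : ℕ → Bool | IsMaxPath PB.om x} := by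
      apply Infinite.of_injective
        (fun k : ℕ =>
          (⟨PB.mx (k+1), PB.mx_isMax (by omega)⟩ : {x : ℕ → Bool | IsMaxPath PB.om x}))
      intro k1 k2 h
      by_contra hne
      rcases Nat.lt_or_ge k1 k2 with hlt | hge
      · exact PB.mx_mono_inj (show k1+1 < k2+1 by omega) (congrArg Subtype.val h)
      · exact PB.mx_mono_inj (show k2+1 < k1+1 by omega) (congrArg Subtype.val h).symm
    exact Cardinal.mk_eq_aleph0 _
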